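/- Let 𝔠 = {C^0,…,C^{M−1}} be an (M,M,N)-complete complementary code with sequences c^k_m of length N, let ω = exp(2πi/M) and f_{i,j} = ω^{i·j}, and for 0 ≤ k ≤ M−1 let B̃_k be the length-M²N sequence whose entry at position i·MN + j·N + n equals f_{i,j} · c^j_{k,n}. Then the set {B̃_0,…,B̃_{M−1}} is a complementary set: Σ_{k=0}^{M−1} C_{B̃_k}(τ) = M³N if τ = 0, and = 0 for all 1 ≤ τ ≤ M²N−1. -/

import Mathlib

open Finset

/-- Aperiodic cross-correlation of length-`L` complex sequences at shift `0 ≤ τ`. -/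
noncomputable def aCorr (a b : ℕ → ℂ) (L τ : ℕ) : ℂ :=
  ∑ k ∈ Finset.range (L - τ), a k * (starRingEnd ℂ) (b (k + τ))

/-- Periodic cross-correlation of length-`L` complex sequences at shift `τ`. -/
noncomputable def pCorr (a b : ℕ → ℂ) (L τ : ℕ) : ℂ :=
  ∑ k ∈ Finset.range L, a k * (starRingEnd ℂ) (b ((k + τ) % L))

/-- For an `(M,M,N)`-CCC with sequences `c k m` (set `k`, member `m`), the length-`M²N`
sequence `B̃ k` whose entry at position `i·MN + j·N + n` is `ω^(i·j) · c j k n`,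
where `ω = exp(2πi/M)`. -/
noncomputable def Bseq (M N : ℕ) (c : ℕ → ℕ → ℕ → ℂ) (k : ℕ) : ℕ → ℂ :=
  fun n =>
    Complex.exp (2 * Real.pi * Complex.I * ((n / (M * N) : ℕ) : ℂ) *
        (((n % (M * N)) / N : ℕ) : ℂ) / (M : ℂ)) *
      c ((n % (M * N)) / N) k (n % N)

-- sum over range (B*N) as double sum
lemma sum_range_mul' {β : Type*} [AddCommMonoid β] (f : ℕ → β) (B N : ℕ) :
    ∑ n ∈ range (B * N), f n = ∑ b ∈ range B, ∑ r ∈ range N, f (b * N + r) := by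
  induction B with
  | zero => simp
  | succ B ih =>
    rw [Nat.succ_mul, Finset.sum_range_add, ih, Finset.sum_range_succ]

-- decomposition of n = b*N + r
lemma decomp_div (M N b r : ℕ) (hN : 0 < N) (hr : r < N) :
    (b * N + r) / (M * N) = b / M ∧ ((b * N + r) % (M * N)) / N = b % M ∧
      (b * N + r) % N = r := by
  have h1 : (b * N + r) / N = b := by
    rw [add_comm, Nat.add_mul_div_right _ _ hN, Nat.div_eq_of_lt hr, zero_add]
  refine ⟨?_, ?_, ?_⟩
  · rw [mul_comm M N, ← Nat.div_div_eq_div_mul, h1]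
  · have hb : b = M * (b / M) + b % M := (Nat.div_add_mod b M).symm
    have : b * N + r = (M * N) * (b / M) + ((b % M) * N + r) := by
      calc b * N + r = (M * (b / M) + b % M) * N + r := by rw [← hb]
        _ = (M * N) * (b / M) + ((b % M) * N + r) := by ring
    rw [this, Nat.mul_add_mod]
    rcases Nat.eq_zero_or_pos M with hM | hM
    · simpa [hM] using h1
    · have hlt : (b % M) * N + r < M * N := by
        calc (b % M) * N + r < (b % M) * N + N := by omega
          _ = (b % M + 1) * N := by ring
          _ ≤ M * N := Nat.mul_le_mul_right _ (Nat.mod_lt _ hM)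
      rw [Nat.mod_eq_of_lt hlt, add_comm, Nat.add_mul_div_right _ _ hN,
        Nat.div_eq_of_lt hr, zero_add]
  · rw [add_comm, Nat.add_mul_mod_self_right, Nat.mod_eq_of_lt hr]

lemma Bseq_apply (M N : ℕ) (c : ℕ → ℕ → ℕ → ℂ) (k b r : ℕ) (hN : 0 < N) (hr : r < N) :
    Bseq M N c k (b * N + r) =
      Complex.exp (2 * Real.pi * Complex.I * ((b / M : ℕ) : ℂ) * ((b % M : ℕ) : ℂ) / (M : ℂ)) *
        c (b % M) k r := by
  obtain ⟨h1, h2, h3⟩ := decomp_div M N b r hN hr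
  simp [Bseq, h1, h2, h3]

lemma sum_split (f : ℕ → ℂ) (B N s : ℕ) (hB : 1 ≤ B) (hs : s ≤ N) :
    ∑ n ∈ range (B * N - s), f n =
      (∑ b ∈ range B, ∑ r ∈ range (N - s), f (b * N + r)) +
      ∑ b ∈ range (B - 1), ∑ u ∈ range s, f (b * N + (N - s) + u) := by
  induction B, hB using Nat.le_induction with
  | base => simp
  | succ B hB ih =>
    have hNB : N ≤ B * N := Nat.le_mul_of_pos_left N hB
    have e0 : (B + 1) * N = B * N + N := by ring
    have key : (B + 1) * N - s = (B * N - s) + N := by omega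
    rw [key, Finset.sum_range_add, ih,
      Finset.sum_range_succ (fun b => ∑ r ∈ range (N - s), f (b * N + r)) B]
    have e1 : (B + 1) - 1 = (B - 1) + 1 := by omega
    rw [show range (B+1-1) = range ((B-1)+1) by rw [e1], Finset.sum_range_succ (fun b => ∑ u ∈ range s, f (b * N + (N - s) + u)) (B-1)]
    have e2 : (B - 1) * N = B * N - N := by rw [Nat.sub_one_mul]
    have hmid : ∑ u ∈ range N, f (B * N - s + u) =
        (∑ u ∈ range s, f ((B - 1) * N + (N - s) + u)) +
          ∑ r ∈ range (N - s), f (B * N + r) := by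
      have e4 := Finset.sum_range_add (fun u => f (B * N - s + u)) s (N - s)
      rw [show s + (N - s) = N by omega] at e4
      rw [e4]
      congr 1
      · apply Finset.sum_congr rfl
        intro u hu
        congr 1
        omega
      · apply Finset.sum_congr rfl
        intro v hv
        congr 1
        omega
    rw [hmid]
    ring

lemma conj_phase (M a b : ℕ) :
    (starRingEnd ℂ) (Complex.exp (2 * Real.pi * Complex.I * (a : ℂ) * (b : ℂ) / (M : ℂ))) =
      Complex.exp (-(2 * Real.pi * Complex.I * (a : ℂ) * (b : ℂ) / (M : ℂ))) := by
  rw [← Complex.exp_conj]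
  congr 1
  simp only [map_div₀, map_mul, Complex.conj_I, Complex.conj_ofReal, Complex.conj_natCast,
    map_ofNat]
  ring

lemma S_eval (M N : ℕ) (hM : 0 < M) (hN : 0 < N) (c : ℕ → ℕ → ℕ → ℂ)
    (hCCC : ∀ k1 < M, ∀ k2 < M, ∀ τ < N,
      ∑ m ∈ Finset.range M, aCorr (c k1 m) (c k2 m) N τ =
        if k1 = k2 ∧ τ = 0 then (M * N : ℂ) else 0)
    (τ : ℕ) (hτ : τ < M ^ 2 * N) :
    ∑ k ∈ range M, aCorr (Bseq M N c k) (Bseq M N c k) (M ^ 2 * N) τ =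
      ∑ b ∈ range (M ^ 2 - τ / N),
        Complex.exp (2 * Real.pi * Complex.I * ((b / M : ℕ) : ℂ) * ((b % M : ℕ) : ℂ) / (M : ℂ)) *
          (starRingEnd ℂ) (Complex.exp (2 * Real.pi * Complex.I *
            (((b + τ / N) / M : ℕ) : ℂ) * (((b + τ / N) % M : ℕ) : ℂ) / (M : ℂ))) *
          (if b % M = (b + τ / N) % M ∧ τ % N = 0 then ((M : ℂ) * (N : ℂ)) else 0) := by
  set t := τ / N with htdef
  set s := τ % N with hsdef
  have hs : s < N := Nat.mod_lt _ hN
  have ht : t < M ^ 2 := (Nat.div_lt_iff_lt_mul hN).mpr hτ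
  have hτeq : t * N + s = τ := by rw [mul_comm]; exact Nat.div_add_mod τ N
  have hBpos : 1 ≤ M ^ 2 - t := by omega
  have hlen : M ^ 2 * N - τ = (M ^ 2 - t) * N - s := by
    have e : (M ^ 2 - t) * N = M ^ 2 * N - t * N := Nat.sub_mul _ _ _
    have e2 : t * N ≤ M ^ 2 * N := Nat.mul_le_mul_right _ (le_of_lt ht)
    omega
  simp only [aCorr]
  rw [Finset.sum_comm, hlen,
    sum_split (fun n => ∑ k ∈ range M,
      Bseq M N c k n * (starRingEnd ℂ) (Bseq M N c k (n + τ))) _ _ _ hBpos (le_of_lt hs)]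
  have tail0 : ∀ b ∈ range (M ^ 2 - t - 1),
      (∑ u ∈ range s, ∑ k ∈ range M,
        Bseq M N c k (b * N + (N - s) + u) *
          (starRingEnd ℂ) (Bseq M N c k (b * N + (N - s) + u + τ))) = 0 := by
    intro b hb
    rcases Nat.eq_zero_or_pos s with hs0 | hs1
    · simp [hs0]
    have harg2 : ∀ u, b * N + (N - s) + u + τ = (b + t + 1) * N + u := by
      intro u
      have e : (b + t + 1) * N = b * N + t * N + N := by ring
      omega
    have step : (∑ u ∈ range s, ∑ k ∈ range M,
        Bseq M N c k (b * N + (N - s) + u) *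
          (starRingEnd ℂ) (Bseq M N c k (b * N + (N - s) + u + τ))) =
        Complex.exp (2 * Real.pi * Complex.I * ((b / M : ℕ) : ℂ) * ((b % M : ℕ) : ℂ) / (M : ℂ)) *
          (starRingEnd ℂ) (Complex.exp (2 * Real.pi * Complex.I *
            (((b + t + 1) / M : ℕ) : ℂ) * (((b + t + 1) % M : ℕ) : ℂ) / (M : ℂ))) *
          (starRingEnd ℂ) (∑ k ∈ range M,
            aCorr (c ((b + t + 1) % M) k) (c (b % M) k) N (N - s)) := by
      rw [Finset.sum_comm, map_sum, Finset.mul_sum]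
      apply Finset.sum_congr rfl
      intro k hk
      simp only [aCorr]
      rw [show N - (N - s) = s by omega, map_sum, Finset.mul_sum]
      apply Finset.sum_congr rfl
      intro u hu
      have hu' : u < s := mem_range.mp hu
      rw [harg2 u, show b * N + (N - s) + u = b * N + ((N - s) + u) by ring,
        Bseq_apply M N c k b ((N - s) + u) hN (by omega),
        Bseq_apply M N c k (b + t + 1) u hN (by omega)]
      simp only [map_mul, Complex.conj_conj]
      rw [show u + (N - s) = (N - s) + u by ring]
      ring
    rw [step, hCCC _ (Nat.mod_lt _ hM) _ (Nat.mod_lt _ hM) (N - s) (by omega),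
      if_neg (by omega)]
    simp
  rw [Finset.sum_eq_zero tail0, add_zero]
  apply Finset.sum_congr rfl
  intro b hb
  have hb' : b < M ^ 2 - t := mem_range.mp hb
  have harg : ∀ r, b * N + r + τ = (b + t) * N + (r + s) := by
    intro r
    have e : (b + t) * N = b * N + t * N := by ring
    omega
  calc (∑ r ∈ range (N - s), ∑ k ∈ range M,
        Bseq M N c k (b * N + r) * (starRingEnd ℂ) (Bseq M N c k (b * N + r + τ)))
      = Complex.exp (2 * Real.pi * Complex.I * ((b / M : ℕ) : ℂ) * ((b % M : ℕ) : ℂ) / (M : ℂ)) *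
          (starRingEnd ℂ) (Complex.exp (2 * Real.pi * Complex.I *
            (((b + t) / M : ℕ) : ℂ) * (((b + t) % M : ℕ) : ℂ) / (M : ℂ))) *
          (∑ k ∈ range M, aCorr (c (b % M) k) (c ((b + t) % M) k) N s) := by
        rw [Finset.sum_comm, Finset.mul_sum]
        apply Finset.sum_congr rfl
        intro k hk
        simp only [aCorr]
        rw [Finset.mul_sum]
        apply Finset.sum_congr rfl
        intro r hr
        have hr' : r < N - s := mem_range.mp hr
        rw [harg r, Bseq_apply M N c k b r hN (by omega),
          Bseq_apply M N c k (b + t) (r + s) hN (by omega), map_mul]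
        ring
    _ = _ := by
        rw [hCCC _ (Nat.mod_lt _ hM) _ (Nat.mod_lt _ hM) s hs]

theorem statement11 (M N : ℕ) (hM : 0 < M) (hN : 0 < N)
    (c : ℕ → ℕ → ℕ → ℂ)
    (hCCC : ∀ k1 < M, ∀ k2 < M, ∀ τ < N,
      ∑ m ∈ Finset.range M, aCorr (c k1 m) (c k2 m) N τ =
        if k1 = k2 ∧ τ = 0 then (M * N : ℂ) else 0) :
    (∑ k ∈ Finset.range M,
        aCorr (Bseq M N c k) (Bseq M N c k) (M ^ 2 * N) 0 = (M ^ 3 * N : ℂ)) ∧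
    (∀ τ, 1 ≤ τ → τ ≤ M ^ 2 * N - 1 →
      ∑ k ∈ Finset.range M,
        aCorr (Bseq M N c k) (Bseq M N c k) (M ^ 2 * N) τ = 0) := by
  have hMN : 0 < M ^ 2 * N := by positivity
  constructor
  · rw [S_eval M N hM hN c hCCC 0 hMN]
    have hterm : ∀ b ∈ range (M ^ 2 - 0 / N),
        Complex.exp (2 * Real.pi * Complex.I * ((b / M : ℕ) : ℂ) * ((b % M : ℕ) : ℂ) / (M : ℂ)) *
          (starRingEnd ℂ) (Complex.exp (2 * Real.pi * Complex.I *
            (((b + 0 / N) / M : ℕ) : ℂ) * (((b + 0 / N) % M : ℕ) : ℂ) / (M : ℂ))) *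
          (if b % M = (b + 0 / N) % M ∧ 0 % N = 0 then ((M : ℂ) * (N : ℂ)) else 0) =
          ((M : ℂ) * (N : ℂ)) := by
      intro b hb
      rw [if_pos (by simp)]
      simp only [Nat.zero_div, Nat.add_zero]
      rw [conj_phase, Complex.exp_neg, mul_inv_cancel₀ (Complex.exp_ne_zero _), one_mul]
    rw [Finset.sum_congr rfl hterm, Finset.sum_const, card_range]
    simp only [Nat.zero_div, Nat.sub_zero, nsmul_eq_mul]
    push_cast
    ring
  · intro τ hτ1 hτ2
    have hτ : τ < M ^ 2 * N := by omega
    rw [S_eval M N hM hN c hCCC τ hτ]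
    by_cases hs0 : τ % N = 0
    swap
    · apply Finset.sum_eq_zero
      intro b hb
      rw [if_neg (by tauto), mul_zero]
    set t := τ / N with htdef
    have ht1 : 1 ≤ t := by
      rcases Nat.eq_zero_or_pos t with h | h
      · exfalso
        have hd := Nat.div_add_mod τ N
        rw [← htdef, h, Nat.mul_zero] at hd
        omega
      · exact h
    have ht : t < M ^ 2 := (Nat.div_lt_iff_lt_mul hN).mpr hτ
    by_cases hdvd : M ∣ t
    swap
    · apply Finset.sum_eq_zero
      intro b hb
      rw [if_neg, mul_zero]
      rintro ⟨h1, -⟩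
      exact hdvd (by
        have := (Nat.modEq_iff_dvd' (Nat.le_add_right b t)).mp h1
        simpa using this)
    obtain ⟨p, hpt⟩ := hdvd
    have hp1 : 1 ≤ p := by
      rcases Nat.eq_zero_or_pos p with h | h
      · exfalso; rw [h, Nat.mul_zero] at hpt; omega
      · exact h
    have hpM : p < M := by
      have : M * p < M * M := by rw [← hpt]; rw [pow_two] at ht; exact ht
      exact Nat.lt_of_mul_lt_mul_left this
    have hM0 : (M : ℂ) ≠ 0 := Nat.cast_ne_zero.mpr hM.ne'
    set ζ : ℂ := Complex.exp (-(2 * Real.pi * Complex.I * (p : ℂ) / (M : ℂ))) with hζdef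
    have hterm : ∀ b ∈ range (M ^ 2 - t),
        Complex.exp (2 * Real.pi * Complex.I * ((b / M : ℕ) : ℂ) * ((b % M : ℕ) : ℂ) / (M : ℂ)) *
          (starRingEnd ℂ) (Complex.exp (2 * Real.pi * Complex.I *
            (((b + t) / M : ℕ) : ℂ) * (((b + t) % M : ℕ) : ℂ) / (M : ℂ))) *
          (if b % M = (b + t) % M ∧ τ % N = 0 then ((M : ℂ) * (N : ℂ)) else 0) =
          ζ ^ (b % M) * ((M : ℂ) * (N : ℂ)) := by
      intro b hb
      have e1 : (b + t) % M = b % M := by rw [hpt, Nat.add_mul_mod_self_left]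
      have e2 : (b + t) / M = b / M + p := by rw [hpt, Nat.add_mul_div_left _ _ hM]
      rw [if_pos ⟨e1.symm, hs0⟩, e1, e2, conj_phase, ← Complex.exp_add]
      congr 2
      rw [hζdef, ← Complex.exp_nat_mul]
      congr 1
      push_cast
      ring
    rw [Finset.sum_congr rfl hterm]
    have elen : M ^ 2 - t = (M - p) * M := by
      have e : (M - p) * M = M * M - p * M := Nat.sub_mul _ _ _
      have e2 : M * p = p * M := mul_comm _ _
      rw [pow_two]
      omega
    rw [elen, sum_range_mul' (fun b => ζ ^ (b % M) * ((M : ℂ) * (N : ℂ))) (M - p) M]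
    have hζM : ζ ^ M = 1 := by
      rw [hζdef, ← Complex.exp_nat_mul]
      rw [Complex.exp_eq_one_iff]
      refine ⟨-(p : ℤ), ?_⟩
      push_cast
      field_simp
    have hζ1 : ζ ≠ 1 := by
      intro h
      rw [hζdef, Complex.exp_eq_one_iff] at h
      obtain ⟨n, hn⟩ := h
      have hπ : (Real.pi : ℂ) ≠ 0 := Complex.ofReal_ne_zero.mpr Real.pi_ne_zero
      have hI := Complex.I_ne_zero
      have h2 : (p : ℂ) = -(n * M) := by
        field_simp at hn
        have h2πI : (2 : ℂ) * Real.pi * Complex.I ≠ 0 := by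
          simp [hπ, Complex.I_ne_zero]
        apply mul_left_cancel₀ h2πI
        linear_combination -(2 * (Real.pi : ℂ) * Complex.I) * hn
      have h3 : (p : ℤ) = -(n * M) := by exact_mod_cast h2
      have h4 : (M : ℤ) ∣ (p : ℤ) := ⟨-n, by linarith⟩
      have h5 : (M : ℤ) ≤ (p : ℤ) := Int.le_of_dvd (by exact_mod_cast hp1) h4
      have : M ≤ p := by exact_mod_cast h5
      omega
    have hinner : ∀ q ∈ range (M - p),
        ∑ j ∈ range M, ζ ^ ((q * M + j) % M) * ((M : ℂ) * (N : ℂ)) = 0 := by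
      intro q hq
      have : ∀ j ∈ range M, ζ ^ ((q * M + j) % M) * ((M : ℂ) * (N : ℂ)) =
          ζ ^ j * ((M : ℂ) * (N : ℂ)) := by
        intro j hj
        have hj' : j < M := mem_range.mp hj
        rw [add_comm, Nat.add_mul_mod_self_right, Nat.mod_eq_of_lt hj']
      rw [Finset.sum_congr rfl this, ← Finset.sum_mul, geom_sum_eq hζ1, hζM, sub_self,
        zero_div, zero_mul]
    exact Finset.sum_eq_zero hinner
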